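/- If $\mathcal{A}$ has a bounded right approximate identity and $\psi:\mathcal{A}\to\mathcal{U}$ is a left $\mathcal{A}$-module homomorphism (not assumed continuous) into a Banach left $\mathcal{A}$-module $\mathcal{U}$, then $\psi$ is continuous. -/

import Mathlib

open Filter Topology

set_option maxHeartbeats 1000000
set_option linter.unusedSectionVars false
set_option linter.unusedVariables false

noncomputable section CohenFactorization

variable {A : Type*} [NonUnitalNormedRing A] [NormedSpace ℂ A] [CompleteSpace A]

section RatSmul
variable {A : Type*} [NonUnitalNormedRing A] [NormedSpace ℂ A]

private lemma den_smul_cancel (q : ℚ) {x y : A} (h : (q.den : ℂ) • x = (q.den : ℂ) • y) : x = y := by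
  have hd : (q.den : ℂ) ≠ 0 := Nat.cast_ne_zero.mpr q.den_nz
  calc x = (q.den : ℂ)⁻¹ • ((q.den : ℂ) • x) := (inv_smul_smul₀ hd x).symm
    _ = (q.den : ℂ)⁻¹ • ((q.den : ℂ) • y) := by rw [h]
    _ = y := inv_smul_smul₀ hd y

private lemma den_smul_q (q : ℚ) (a : A) : (q.den : ℂ) • ((q:ℂ) • a) = q.num • a := by
  rw [smul_smul, ← Int.cast_smul_eq_zsmul ℂ]
  congr 1
  norm_cast
  rw [mul_comm]
  exact_mod_cast Rat.mul_den_eq_num q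

lemma ratCast_smul_mul (q : ℚ) (a b : A) : ((q:ℂ) • a) * b = (q:ℂ) • (a * b) := by
  apply den_smul_cancel q
  conv_lhs => rw [Nat.cast_smul_eq_nsmul ℂ q.den, ← smul_mul_assoc,
    ← Nat.cast_smul_eq_nsmul ℂ q.den, den_smul_q, smul_mul_assoc]
  rw [den_smul_q]

lemma mul_ratCast_smul (q : ℚ) (a b : A) : a * ((q:ℂ) • b) = (q:ℂ) • (a * b) := by
  apply den_smul_cancel q
  conv_lhs => rw [Nat.cast_smul_eq_nsmul ℂ q.den, ← mul_smul_comm,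
    ← Nat.cast_smul_eq_nsmul ℂ q.den, den_smul_q, mul_smul_comm]
  rw [den_smul_q]

end RatSmul

noncomputable def pmul (x y : ℚ × A) : ℚ × A :=
  (x.1 * y.1, (x.1 : ℂ) • y.2 + (y.1 : ℂ) • x.2 + x.2 * y.2)

def pone : ℚ × A := (1, 0)

noncomputable def psmul (q : ℚ) (x : ℚ × A) : ℚ × A := (q * x.1, (q : ℂ) • x.2)

noncomputable def pnorm (x : ℚ × A) : ℝ := |(x.1 : ℝ)| + ‖x.2‖

noncomputable def act (a : A) (x : ℚ × A) : A := (x.1 : ℂ) • a + a * x.2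

lemma pmul_one (x : ℚ × A) : pmul x pone = x := by simp [pmul, pone]
lemma one_pmul (x : ℚ × A) : pmul pone x = x := by simp [pmul, pone]

lemma pmul_assoc (x y z : ℚ × A) : pmul (pmul x y) z = pmul x (pmul y z) := by
  unfold pmul
  refine Prod.ext (by push_cast; ring) ?_
  simp only [mul_add, add_mul, smul_add, smul_smul, ratCast_smul_mul, mul_ratCast_smul,
    mul_assoc, Rat.cast_mul]
  module

lemma pmul_add (x y z : ℚ × A) : pmul x (y + z) = pmul x y + pmul x z := by
  unfold pmul
  refine Prod.ext (by push_cast [Prod.fst_add]; ring) ?_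
  simp only [Prod.snd_add, Prod.fst_add, mul_add, smul_add, Rat.cast_add, add_smul]
  abel

lemma add_pmul (x y z : ℚ × A) : pmul (x + y) z = pmul x z + pmul y z := by
  unfold pmul
  refine Prod.ext (by push_cast [Prod.fst_add]; ring) ?_
  simp only [Prod.snd_add, Prod.fst_add, add_mul, smul_add, Rat.cast_add, add_smul]
  abel

lemma pmul_sub (x y z : ℚ × A) : pmul x (y - z) = pmul x y - pmul x z := by
  unfold pmul
  refine Prod.ext (by push_cast [Prod.fst_sub]; ring) ?_
  simp only [Prod.snd_sub, Prod.fst_sub, mul_sub, smul_sub, Rat.cast_sub, sub_smul]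
  abel

lemma sub_pmul (x y z : ℚ × A) : pmul (x - y) z = pmul x z - pmul y z := by
  unfold pmul
  refine Prod.ext (by push_cast [Prod.fst_sub]; ring) ?_
  simp only [Prod.snd_sub, Prod.fst_sub, sub_mul, smul_sub, Rat.cast_sub, sub_smul]
  abel

lemma psmul_pmul (q : ℚ) (x y : ℚ × A) : pmul (psmul q x) y = psmul q (pmul x y) := by
  unfold pmul psmul
  refine Prod.ext (by push_cast; ring) ?_
  simp only [smul_add, smul_smul, ratCast_smul_mul, Rat.cast_mul]
  module

lemma pmul_psmul (q : ℚ) (x y : ℚ × A) : pmul x (psmul q y) = psmul q (pmul x y) := by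
  unfold pmul psmul
  refine Prod.ext (by push_cast; ring) ?_
  simp only [smul_add, smul_smul, mul_ratCast_smul, Rat.cast_mul]
  module

lemma pnorm_nonneg (x : ℚ × A) : 0 ≤ pnorm x :=
  add_nonneg (abs_nonneg _) (norm_nonneg _)

lemma pnorm_one : pnorm (pone : ℚ × A) = 1 := by simp [pnorm, pone]

lemma pnorm_add_le (x y : ℚ × A) : pnorm (x + y) ≤ pnorm x + pnorm y := by
  unfold pnorm
  push_cast [Prod.fst_add, Prod.snd_add]
  have := abs_add_le ((x.1:ℝ)) ((y.1:ℝ))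
  have := norm_add_le x.2 y.2
  linarith

lemma pnorm_neg (x : ℚ × A) : pnorm (-x) = pnorm x := by simp [pnorm]

lemma pnorm_sub_le (x y : ℚ × A) : pnorm (x - y) ≤ pnorm x + pnorm y := by
  rw [sub_eq_add_neg]
  exact (pnorm_add_le x (-y)).trans (by rw [pnorm_neg])

lemma pnorm_psmul (q : ℚ) (x : ℚ × A) : pnorm (psmul q x) = |(q:ℝ)| * pnorm x := by
  unfold pnorm psmul
  push_cast
  simp [abs_mul, norm_smul, mul_add, Complex.norm_ratCast]

lemma norm_smul_rat (q : ℚ) (a : A) : ‖(q:ℂ) • a‖ = |(q:ℝ)| * ‖a‖ := by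
  rw [norm_smul]
  norm_num [Complex.norm_ratCast]

lemma pnorm_pmul_le (x y : ℚ × A) : pnorm (pmul x y) ≤ pnorm x * pnorm y := by
  unfold pnorm pmul
  push_cast
  have h1 := norm_add_le ((x.1 : ℂ) • y.2 + (y.1 : ℂ) • x.2) (x.2 * y.2)
  have h2 := norm_add_le ((x.1 : ℂ) • y.2) ((y.1 : ℂ) • x.2)
  have e1 := norm_smul_rat x.1 y.2
  have e2 := norm_smul_rat y.1 x.2
  have h3 := norm_mul_le x.2 y.2
  have := abs_nonneg ((x.1:ℝ)); have := abs_nonneg ((y.1:ℝ))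
  have := norm_nonneg x.2; have := norm_nonneg y.2
  rw [abs_mul]
  nlinarith

lemma act_one (a : A) : act a (pone : ℚ × A) = a := by simp [act, pone]

lemma act_act (a : A) (x y : ℚ × A) : act (act a x) y = act a (pmul x y) := by
  unfold act pmul
  simp only [smul_add, smul_smul, add_mul, mul_add, ratCast_smul_mul, mul_ratCast_smul,
    Rat.cast_mul, mul_assoc]
  module

lemma act_add (a : A) (x y : ℚ × A) : act a (x + y) = act a x + act a y := by
  unfold act
  simp only [Prod.fst_add, Prod.snd_add, Rat.cast_add, add_smul, mul_add]
  abel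

lemma act_sub (a : A) (x y : ℚ × A) : act a (x - y) = act a x - act a y := by
  unfold act
  simp only [Prod.fst_sub, Prod.snd_sub, Rat.cast_sub, sub_smul, mul_sub]
  abel

lemma act_psmul (a : A) (q : ℚ) (x : ℚ × A) : act a (psmul q x) = (q:ℂ) • act a x := by
  unfold act psmul
  push_cast
  simp only [smul_add, smul_smul, mul_ratCast_smul]

lemma norm_act_le (a : A) (x : ℚ × A) : ‖act a x‖ ≤ ‖a‖ * pnorm x := by
  unfold act pnorm
  refine (norm_add_le _ _).trans ?_
  rw [norm_smul_rat]
  have := norm_mul_le a x.2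
  have := abs_nonneg ((x.1:ℝ)); have := norm_nonneg a
  nlinarith

lemma act_tendsto_zero (x : ℚ × A) {a : ℕ → A} (ha : Tendsto a atTop (𝓝 0)) :
    Tendsto (fun k => act (a k) x) atTop (𝓝 0) := by
  have : Tendsto (fun k => (x.1 : ℂ) • a k + a k * x.2) atTop (𝓝 ((x.1:ℂ) • (0:A) + 0 * x.2)) := by
    exact (ha.const_smul _).add (ha.mul_const _)
  simpa [act] using this

lemma neg_pmul (x y : ℚ × A) : pmul (-x) y = -(pmul x y) := by
  unfold pmul
  refine Prod.ext (by push_cast [Prod.fst_neg]; ring) ?_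
  simp only [Prod.fst_neg, Prod.snd_neg, Rat.cast_neg, neg_smul, smul_neg, neg_mul]
  abel

lemma act_neg (a : A) (x : ℚ × A) : act a (-x) = -(act a x) := by
  unfold act
  simp only [Prod.fst_neg, Prod.snd_neg, Rat.cast_neg, neg_smul, mul_neg]
  abel

/-- Neumann-type inverse of `1 + w` in the rational unitization. -/
lemma pinv_exists {r : ℝ} (hr : r < 1) {w : ℚ × A} (hw : pnorm w ≤ r) :
    ∃ z : ℚ × A, pmul (pone + w) z = pone ∧ pmul z (pone + w) = pone ∧
      pnorm z ≤ 1 / (1 - r) := by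
  have hr0 : (0:ℝ) ≤ r := le_trans (pnorm_nonneg w) hw
  set s : ℚ := 1 + w.1 with hs
  have hw1 : |(w.1:ℝ)| + ‖w.2‖ ≤ r := hw
  have habs : |(w.1:ℝ)| < 1 := by
    have := norm_nonneg w.2; linarith
  have hcast : (s:ℝ) = 1 + (w.1:ℝ) := by rw [hs]; push_cast; ring
  have hpos : (0:ℝ) < 1 + (w.1:ℝ) := by
    have := abs_lt.mp habs; linarith [this.1]
  have hsl : 1 - |(w.1:ℝ)| ≤ |(s:ℝ)| := by
    rw [hcast, abs_of_pos hpos]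
    linarith [neg_abs_le ((w.1:ℝ))]
  have hspos : 0 < |(s:ℝ)| := by linarith
  have hsne : s ≠ 0 := by
    intro h; rw [h] at hspos; simp at hspos
  have hKlt : ‖w.2‖ < |(s:ℝ)| := by
    have := norm_nonneg w.2
    nlinarith [hw1, hsl]
  have hsinv : |((s⁻¹:ℚ):ℝ)| = |(s:ℝ)|⁻¹ := by push_cast; rw [abs_inv]
  -- fixed point equation, both sides
  have key : ∀ (side : Bool), ∃ v : A,
      (s:ℂ) • v + ((s⁻¹:ℚ):ℂ) • w.2 + (if side then w.2 * v else v * w.2) = 0 := by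
    intro side
    set T : A → A := fun v => -(((s⁻¹:ℚ):ℂ) • (((s⁻¹:ℚ):ℂ) • w.2 +
      (if side then w.2 * v else v * w.2))) with hT
    set K : NNReal := ⟨|(s:ℝ)|⁻¹ * ‖w.2‖, by positivity⟩ with hK
    have hKcoe : (K:ℝ) = |(s:ℝ)|⁻¹ * ‖w.2‖ := rfl
    have hKlt1 : K < 1 := by
      rw [← NNReal.coe_lt_coe, hKcoe]
      show |(s:ℝ)|⁻¹ * ‖w.2‖ < 1
      rw [inv_mul_lt_iff₀ hspos]
      simpa using hKlt
    have hdiff : ∀ v v' : A, T v - T v' =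
        -(((s⁻¹:ℚ):ℂ) • ((if side then w.2 * (v - v') else (v - v') * w.2))) := by
      intro v v'
      rw [hT]
      cases side <;> simp only [if_true, if_false, Bool.false_eq_true, ite_false, ite_true] <;>
        · simp only [smul_add, mul_sub, sub_mul, smul_sub]
          abel
    have hlip : LipschitzWith K T := by
      apply LipschitzWith.of_dist_le_mul
      intro v v'
      rw [dist_eq_norm, dist_eq_norm, hdiff v v', norm_neg, norm_smul_rat, hsinv]
      have hm : ‖(if side then w.2 * (v - v') else (v - v') * w.2)‖ ≤ ‖w.2‖ * ‖v - v'‖ := by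
        cases side
        · simpa [mul_comm ‖v - v'‖ ‖w.2‖] using norm_mul_le (v - v') w.2
        · simpa using norm_mul_le w.2 (v - v')
      refine (mul_le_mul_of_nonneg_left hm (by positivity)).trans_eq ?_
      rw [hKcoe]; ring
    have hcw : ContractingWith K T := ⟨hKlt1, hlip⟩
    obtain ⟨v, hv, -⟩ := hcw.exists_fixedPoint 0 (edist_ne_top _ _)
    refine ⟨v, ?_⟩
    have hsv : (s:ℂ) • v = -(((s⁻¹:ℚ):ℂ) • w.2 + (if side then w.2 * v else v * w.2)) := by
      conv_lhs => rw [← hv]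
      rw [hT]
      simp only
      rw [smul_neg, smul_smul, ← Rat.cast_mul, mul_inv_cancel₀ hsne, Rat.cast_one, one_smul]
    rw [hsv]; abel
  obtain ⟨vr, hvr⟩ := key true
  obtain ⟨vl, hvl⟩ := key false
  have hxw : pone + w = ((s, w.2) : ℚ × A) := by
    refine Prod.ext ?_ ?_ <;> simp [pone, hs]
  have hfst : s * s⁻¹ = 1 := mul_inv_cancel₀ hsne
  have hright : pmul (pone + w) (s⁻¹, vr) = pone := by
    rw [hxw]
    refine Prod.ext ?_ ?_
    · simpa [pmul, pone] using hfst
    · show (s:ℂ) • vr + ((s⁻¹:ℚ):ℂ) • w.2 + w.2 * vr = (pone : ℚ × A).2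
      simpa [pone] using hvr
  have hleft : pmul (s⁻¹, vl) (pone + w) = pone := by
    rw [hxw]
    refine Prod.ext ?_ ?_
    · simpa [pmul, pone, mul_comm] using hfst
    · show ((s⁻¹:ℚ):ℂ) • w.2 + (s:ℂ) • vl + vl * w.2 = (pone : ℚ × A).2
      have := hvl
      simp only [if_false, Bool.false_eq_true, ite_false] at this
      simp only [pone]
      rw [← this]; abel
  have heq : ((s⁻¹, vl) : ℚ × A) = (s⁻¹, vr) := by
    calc ((s⁻¹, vl) : ℚ × A) = pmul (s⁻¹, vl) pone := (pmul_one _).symm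
      _ = pmul (s⁻¹, vl) (pmul (pone + w) (s⁻¹, vr)) := by rw [hright]
      _ = pmul (pmul (s⁻¹, vl) (pone + w)) (s⁻¹, vr) := (pmul_assoc _ _ _).symm
      _ = pmul pone (s⁻¹, vr) := by rw [hleft]
      _ = (s⁻¹, vr) := one_pmul _
  set z : ℚ × A := (s⁻¹, vr) with hz
  have hz1 : pmul (pone + w) z = pone := hright
  have hz2 : pmul z (pone + w) = pone := by rw [← heq]; exact hleft
  refine ⟨z, hz1, hz2, ?_⟩
  -- norm bound
  have hexp : z = pone - pmul w z := by
    have := hz1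
    rw [add_pmul, one_pmul] at this
    rw [← this]; abel
  have hb : pnorm z ≤ 1 + r * pnorm z := by
    conv_lhs => rw [hexp]
    rw [sub_eq_add_neg]
    refine (pnorm_add_le _ _).trans ?_
    rw [pnorm_one, pnorm_neg]
    have := (pnorm_pmul_le w z).trans (mul_le_mul_of_nonneg_right hw (pnorm_nonneg z))
    linarith
  have h1r : 0 < 1 - r := by linarith
  rw [le_div_iff₀ h1r]
  linarith

lemma bai_seq {C : ℝ} (hC : 0 < C)
    (hbai : ∀ (F : Finset A) (ε : ℝ), 0 < ε → ∃ e : A, ‖e‖ ≤ C ∧ ∀ a ∈ F, ‖a * e - a‖ < ε)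
    {g : ℕ → A} (hg : Tendsto g atTop (𝓝 0)) (v : A) {ε : ℝ} (hε : 0 < ε) :
    ∃ e : A, ‖e‖ ≤ C ∧ ‖v * e - v‖ < ε ∧ ∀ k, ‖g k * e - g k‖ < ε := by
  classical
  have hden : (0:ℝ) < C + 2 := by linarith
  obtain ⟨N, hN⟩ := (Metric.tendsto_atTop.mp hg (ε / (C + 2)) (by positivity))
  obtain ⟨e, he, hFe⟩ := hbai (insert v ((Finset.range (N + 1)).image g)) ε hε
  refine ⟨e, he, hFe v (Finset.mem_insert_self _ _), ?_⟩
  intro k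
  by_cases hk : k ≤ N
  · exact hFe (g k) (Finset.mem_insert_of_mem (Finset.mem_image_of_mem g
      (Finset.mem_range.mpr (Nat.lt_succ_of_le hk))))
  · push_neg at hk
    have hgk : ‖g k‖ < ε / (C + 2) := by
      have := hN k (le_of_lt hk)
      rwa [dist_zero_right] at this
    have h1 : ‖g k * e - g k‖ ≤ ‖g k‖ * ‖e‖ + ‖g k‖ :=
      (norm_sub_le _ _).trans (by gcongr; exact norm_mul_le _ _)
    have h2 : ‖g k‖ * ‖e‖ + ‖g k‖ ≤ ‖g k‖ * (C + 1) := by nlinarith [norm_nonneg (g k)]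
    have h3 : ‖g k‖ * (C + 1) < ε / (C + 2) * (C + 1) := by
      apply mul_lt_mul_of_pos_right hgk; linarith
    have h4 : ε / (C + 2) * (C + 1) < ε := by
      rw [div_mul_eq_mul_div, div_lt_iff₀ hden]; nlinarith
    linarith

lemma step_lemma {C : ℝ} (hC : 0 < C)
    (hbai : ∀ (F : Finset A) (ε : ℝ), 0 < ε → ∃ e : A, ‖e‖ ≤ C ∧ ∀ a ∈ F, ‖a * e - a‖ < ε)
    {γ γ' : ℚ} (hγ' : γ' = 1 - γ) (hγpos : 0 < (γ:ℝ)) (hγ'pos : 0 < (γ':ℝ))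
    (hγ'le : (γ':ℝ) ≤ 1) (hγC : (γ:ℝ) * (2 + C) ≤ 1/2)
    {a : ℕ → A} (ha : Tendsto a atTop (𝓝 0))
    (m : ℕ) (c : A) (y : ℚ × A)
    (hyu : pmul y (γ'^m, c) = pone) (huy : pmul (γ'^m, c) y = pone) :
    ∃ (c' : A) (y' : ℚ × A),
      pmul y' (γ'^(m+1), c') = pone ∧ pmul (γ'^(m+1), c') y' = pone ∧
      ‖c' - c‖ ≤ C * (γ:ℝ) * (γ':ℝ)^m ∧
      ∀ k, ‖act (a k) y' - act (a k) y‖ ≤ (1/2)^m := by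
  have hpy1 : 0 < pnorm y + 1 := by linarith [pnorm_nonneg y]
  set δ : ℝ := min 1 ((1/2)^m / (8 * (γ:ℝ) * (pnorm y + 1))) with hδ
  have hδpos : 0 < δ := lt_min one_pos (by positivity)
  have hδ1 : δ ≤ 1 := min_le_left _ _
  have hδ2 : δ ≤ (1/2)^m / (8 * (γ:ℝ) * (pnorm y + 1)) := min_le_right _ _
  clear_value δ
  have hg : Tendsto (fun k => act (a k) y) atTop (𝓝 0) := act_tendsto_zero y ha
  obtain ⟨e, heC, hev, heg⟩ := bai_seq hC hbai hg y.2 hδpos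
  have hy1 : (y.1 : ℝ) * (γ':ℝ)^m = 1 := by
    have h := congrArg Prod.fst hyu
    simp only [pmul, pone] at h
    exact_mod_cast congrArg (fun q : ℚ => (q:ℝ)) h
  have hγ'm_pos : (0:ℝ) < (γ':ℝ)^m := pow_pos hγ'pos m
  have hγ'm_le : (γ':ℝ)^m ≤ 1 := pow_le_one₀ (le_of_lt hγ'pos) hγ'le
  have hy1abs : |(y.1:ℝ)| * (γ':ℝ)^m = 1 := by
    rw [abs_of_pos]
    · exact hy1
    · nlinarith
  set pe : ℚ × A := ((-1 : ℚ), e) with hpe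
  set w : ℚ × A := psmul (γ * γ'^m) (pmul y pe) with hw
  -- bound pnorm (pmul y pe)
  have hype : pnorm (pmul y pe) ≤ |(y.1:ℝ)| * (1 + C) + δ := by
    have hsnd : (pmul y pe).2 = (y.1:ℂ) • e + (y.2 * e - y.2) := by
      simp only [pmul, hpe]
      push_cast
      module
    have hfst : (((pmul y pe).1 : ℚ):ℝ) = -(y.1:ℝ) := by
      simp only [pmul, hpe]; push_cast; ring
    unfold pnorm
    rw [hsnd, hfst, abs_neg]
    have h1 : ‖(y.1:ℂ) • e + (y.2 * e - y.2)‖ ≤ ‖(y.1:ℂ) • e‖ + ‖y.2 * e - y.2‖ :=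
      norm_add_le _ _
    have h2 : ‖(y.1:ℂ) • e‖ ≤ |(y.1:ℝ)| * C := by
      rw [norm_smul_rat]
      exact mul_le_mul_of_nonneg_left heC (abs_nonneg _)
    have := abs_nonneg ((y.1:ℝ))
    nlinarith [le_of_lt hev]
  have habsγ : |((γ * γ'^m : ℚ):ℝ)| = (γ:ℝ) * (γ':ℝ)^m := by
    push_cast
    rw [abs_of_pos (by positivity)]
  have hwnorm : pnorm w ≤ 1/2 := by
    rw [hw, pnorm_psmul, habsγ]
    have h3 : (γ:ℝ) * (γ':ℝ)^m * pnorm (pmul y pe) ≤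
        (γ:ℝ) * (γ':ℝ)^m * (|(y.1:ℝ)| * (1 + C) + δ) := by
      apply mul_le_mul_of_nonneg_left hype (by positivity)
    have h4 : (γ:ℝ) * (γ':ℝ)^m * (|(y.1:ℝ)| * (1 + C) + δ) =
        (γ:ℝ) * (1 + C) * (|(y.1:ℝ)| * (γ':ℝ)^m) + (γ:ℝ) * (γ':ℝ)^m * δ := by ring
    rw [h4, hy1abs] at h3
    have h50 : (γ':ℝ)^m * δ ≤ 1 := by nlinarith
    have h50 : (γ':ℝ)^m * δ ≤ 1 := by nlinarith
    have h5 : (γ:ℝ) * (γ':ℝ)^m * δ ≤ (γ:ℝ) := by nlinarith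
    have := hγ'm_pos
    nlinarith
  obtain ⟨z, hz1, hz2, hznorm⟩ := pinv_exists (by norm_num : (1:ℝ)/2 < 1) hwnorm
  have hznorm2 : pnorm z ≤ 2 := by
    have : (1:ℝ) / (1 - 1/2) = 2 := by norm_num
    linarith [hznorm.trans_eq this]
  set u : ℚ × A := (γ'^m, c) with hu
  set c' : A := c + ((γ * γ'^m : ℚ):ℂ) • e with hc'
  set u' : ℚ × A := (γ'^(m+1), c') with hu'def
  have hu' : u' = pmul u (pone + w) := by
    rw [pmul_add, pmul_one]
    have huw : pmul u w = psmul (γ * γ'^m) pe := by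
      rw [hw, pmul_psmul, ← pmul_assoc, huy, one_pmul]
    rw [huw]
    refine Prod.ext ?_ ?_
    · show (γ'^(m+1) : ℚ) = (u + psmul (γ * γ'^m) pe).1
      simp only [Prod.fst_add, hu, psmul, hpe]
      rw [hγ']; ring
    · show c' = (u + psmul (γ * γ'^m) pe).2
      simp only [Prod.snd_add, hu, psmul, hpe, hc']
  set y' : ℚ × A := pmul z y with hy'
  refine ⟨c', y', ?_, ?_, ?_, ?_⟩
  · rw [← hu'def, hu', hy', pmul_assoc]
    have : pmul y (pmul u (pone + w)) = pone + w := by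
      rw [← pmul_assoc, hyu, one_pmul]
    rw [this]
    exact hz2
  · rw [← hu'def, hu', hy', pmul_assoc, ← pmul_assoc (pone + w) z y, hz1, one_pmul, huy]
  · rw [hc']
    have : ‖(((γ * γ'^m : ℚ)):ℂ) • e‖ ≤ (γ:ℝ) * (γ':ℝ)^m * C := by
      rw [norm_smul_rat, habsγ]
      exact mul_le_mul_of_nonneg_left heC (by positivity)
    calc ‖c + ((γ * γ'^m : ℚ):ℂ) • e - c‖ = ‖((γ * γ'^m : ℚ):ℂ) • e‖ := by
          congr 1; abel
      _ ≤ (γ:ℝ) * (γ':ℝ)^m * C := this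
      _ = C * (γ:ℝ) * (γ':ℝ)^m := by ring
  · intro k
    have hz_eq : z - pone = -(pmul w z) := by
      have h := hz1
      rw [add_pmul, one_pmul] at h
      rw [← h]; abel
    have hy'y : y' - y = -(pmul w (pmul z y)) := by
      calc y' - y = pmul (z - pone) y := by rw [sub_pmul, one_pmul, hy']
        _ = pmul (-(pmul w z)) y := by rw [hz_eq]
        _ = -(pmul (pmul w z) y) := neg_pmul _ _
        _ = -(pmul w (pmul z y)) := by rw [pmul_assoc]
    have hkey : act (a k) y' - act (a k) y = -(act (act (a k) w) (pmul z y)) := by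
      rw [← act_sub, hy'y, act_neg, act_act]
    have hactw : act (a k) w = ((γ * γ'^m : ℚ):ℂ) • ((act (a k) y) * e - act (a k) y) := by
      rw [hw, act_psmul]
      congr 1
      rw [← act_act]
      show act (act (a k) y) pe = _
      simp [act, hpe]
      module
    have hnw : ‖act (a k) w‖ ≤ (γ:ℝ) * (γ':ℝ)^m * δ := by
      rw [hactw, norm_smul_rat, habsγ]
      exact mul_le_mul_of_nonneg_left (le_of_lt (heg k)) (by positivity)
    have hbound : ‖act (a k) y' - act (a k) y‖ ≤
        ((γ:ℝ) * (γ':ℝ)^m * δ) * (2 * pnorm y) := by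
      rw [hkey, norm_neg]
      refine (norm_act_le _ _).trans ?_
      have hzy : pnorm (pmul z y) ≤ 2 * pnorm y := by
        refine (pnorm_pmul_le z y).trans ?_
        exact mul_le_mul_of_nonneg_right hznorm2 (pnorm_nonneg y)
      exact mul_le_mul hnw hzy (pnorm_nonneg _) (mul_nonneg (mul_nonneg hγpos.le hγ'm_pos.le) hδpos.le)
    have hδ2' : δ * (8 * (γ:ℝ) * (pnorm y + 1)) ≤ (1/2)^m := by
      rw [le_div_iff₀ (by positivity)] at hδ2
      exact hδ2
    refine hbound.trans ?_
    have hA : 0 ≤ (γ:ℝ) * δ * (2 * pnorm y) := by nlinarith [mul_nonneg (mul_nonneg hγpos.le hδpos.le) (pnorm_nonneg y)]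
    have h6 : (γ:ℝ) * (γ':ℝ)^m * δ * (2 * pnorm y) ≤ (γ:ℝ) * δ * (2 * pnorm y) := by
      nlinarith [mul_le_mul_of_nonneg_left hγ'm_le hA]
    have h7 : (γ:ℝ) * δ * (2 * pnorm y) ≤ δ * (8 * (γ:ℝ) * (pnorm y + 1)) := by
      nlinarith [mul_nonneg (mul_nonneg (le_of_lt hγpos) (le_of_lt hδpos)) (pnorm_nonneg y),
        mul_nonneg (le_of_lt hγpos) (le_of_lt hδpos)]
    linarith

theorem cohen_factorization {C : ℝ} (hC : 0 < C)
    (hbai : ∀ (F : Finset A) (ε : ℝ), 0 < ε → ∃ e : A, ‖e‖ ≤ C ∧ ∀ a ∈ F, ‖a * e - a‖ < ε)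
    (a : ℕ → A) (ha : Tendsto a atTop (𝓝 0)) :
    ∃ (c : A) (b : ℕ → A), Tendsto b atTop (𝓝 0) ∧ ∀ k, a k = b k * c := by
  classical
  -- choice of γ
  set q : ℕ := ⌈C⌉₊ with hq
  set γ : ℚ := 1 / (2 * (q + 2)) with hγdef
  set γ' : ℚ := 1 - γ with hγ'def
  have hqC : C ≤ (q:ℝ) := Nat.le_ceil C
  have hγR : (γ:ℝ) = 1 / (2 * ((q:ℝ) + 2)) := by rw [hγdef]; push_cast; ring
  have hγpos : 0 < (γ:ℝ) := by rw [hγR]; positivity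
  have hγC : (γ:ℝ) * (2 + C) ≤ 1/2 := by
    rw [hγR]
    rw [div_mul_eq_mul_div, div_le_div_iff₀ (by positivity) (by norm_num)]
    nlinarith
  have hγlt : (γ:ℝ) < 1 := by
    rw [hγR]
    rw [div_lt_one (by positivity)]
    nlinarith [Nat.cast_nonneg (α := ℝ) q]
  have hγ'R : (γ':ℝ) = 1 - (γ:ℝ) := by rw [hγ'def]; push_cast; ring
  have hγ'pos : 0 < (γ':ℝ) := by rw [hγ'R]; linarith
  have hγ'le : (γ':ℝ) ≤ 1 := by rw [hγ'R]; linarith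
  have hγ'lt : (γ':ℝ) < 1 := by rw [hγ'R]; linarith
  -- the invariant
  set Inv : ℕ → A × (ℚ × A) → Prop := fun m p =>
    pmul p.2 (γ'^m, p.1) = pone ∧ pmul (γ'^m, p.1) p.2 = pone with hInv
  have h0 : Inv 0 ((0:A), pone) := by
    have hp : ((γ'^0, (0:A)) : ℚ × A) = pone := by rw [pow_zero]; rfl
    constructor <;> · show pmul _ _ = pone; rw [hp, pmul_one]
  have hstep : ∀ (m : ℕ) (p : {p : A × (ℚ × A) // Inv m p}),
      ∃ p' : A × (ℚ × A), Inv (m+1) p' ∧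
        ‖p'.1 - p.1.1‖ ≤ C * (γ:ℝ) * (γ':ℝ)^m ∧
        ∀ k, ‖act (a k) p'.2 - act (a k) p.1.2‖ ≤ (1/2)^m := by
    intro m p
    obtain ⟨c', y', h1, h2, h3, h4⟩ := step_lemma hC hbai hγ'def hγpos hγ'pos hγ'le hγC ha
      m p.1.1 p.1.2 p.2.1 p.2.2
    exact ⟨(c', y'), ⟨h1, h2⟩, h3, h4⟩
  let F : (m : ℕ) → {p : A × (ℚ × A) // Inv m p} :=
    fun m => Nat.rec ⟨((0:A), pone), h0⟩
      (fun m ih => ⟨Classical.choose (hstep m ih), (Classical.choose_spec (hstep m ih)).1⟩) m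
  let cseq : ℕ → A := fun m => (F m).1.1
  let h : ℕ → ℕ → A := fun m k => act (a k) (F m).1.2
  have hFstep : ∀ m, ‖cseq (m+1) - cseq m‖ ≤ C * (γ:ℝ) * (γ':ℝ)^m ∧
      ∀ k, ‖h (m+1) k - h m k‖ ≤ (1/2)^m :=
    fun m => (Classical.choose_spec (hstep m (F m))).2
  -- convergence of cseq
  have hccauchy : CauchySeq cseq := by
    apply cauchySeq_of_le_geometric (γ':ℝ) (C * (γ:ℝ)) hγ'lt
    intro n
    rw [dist_eq_norm]
    have := (hFstep n).1
    rwa [norm_sub_rev] at this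
  obtain ⟨c, hc⟩ := cauchySeq_tendsto_of_complete hccauchy
  -- convergence of h in m, uniformly in k
  have hhcauchy : ∀ k, CauchySeq (fun m => h m k) := by
    intro k
    apply cauchySeq_of_le_geometric (1/2 : ℝ) 1 (by norm_num)
    intro n
    rw [dist_eq_norm, norm_sub_rev]
    exact ((hFstep n).2 k).trans (by norm_num)
  have hbk : ∀ k, ∃ bk : A, Tendsto (fun m => h m k) atTop (𝓝 bk) :=
    fun k => cauchySeq_tendsto_of_complete (hhcauchy k)
  choose b hb using hbk
  have hdistb : ∀ m k, dist (h m k) (b k) ≤ 1 * (1/2)^m / (1 - 1/2) := by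
    intro m k
    apply dist_le_of_le_geometric_of_tendsto (1/2 : ℝ) 1 (by norm_num) ?_ (hb k) m
    intro n
    rw [dist_eq_norm, norm_sub_rev]
    exact ((hFstep n).2 k).trans (by norm_num)
  refine ⟨c, b, ?_, ?_⟩
  · -- b is null
    rw [Metric.tendsto_atTop]
    intro ε hε
    obtain ⟨M, hM⟩ : ∃ M : ℕ, (2:ℝ) * (1/2)^M < ε/2 := by
      obtain ⟨M, hM⟩ := exists_pow_lt_of_lt_one (show (0:ℝ) < ε/4 by linarith) (by norm_num : (1:ℝ)/2 < 1)
      exact ⟨M, by linarith⟩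
    have hM' : Tendsto (fun k => h M k) atTop (𝓝 0) := act_tendsto_zero _ ha
    rw [Metric.tendsto_atTop] at hM'
    obtain ⟨N, hN⟩ := hM' (ε/2) (by linarith)
    refine ⟨N, fun k hk => ?_⟩
    have h1 := hdistb M k
    have h2 := hN k hk
    rw [dist_zero_right] at h2 ⊢
    have : (1:ℝ) * (1/2)^M / (1 - 1/2) = 2 * (1/2)^M := by ring
    rw [this] at h1
    calc ‖b k‖ = dist (b k) 0 := (dist_zero_right _).symm
      _ ≤ dist (b k) (h M k) + dist (h M k) 0 := dist_triangle _ _ _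
      _ < ε/2 + ε/2 := by
          apply add_lt_add
          · rw [dist_comm]; linarith
          · rw [dist_zero_right]; exact h2
      _ = ε := by ring
  · -- factorization
    intro k
    have hak : ∀ m, a k = ((γ'^m : ℚ):ℂ) • h m k + h m k * cseq m := by
      intro m
      have h1 : a k = act (a k) (pmul (F m).1.2 (γ'^m, cseq m)) := by
        rw [(F m).2.1, act_one]
      rw [← act_act] at h1
      exact h1
    have hlim : Tendsto (fun m => ((γ'^m : ℚ):ℂ) • h m k + h m k * cseq m) atTop
        (𝓝 ((0:ℂ) • b k + b k * c)) := by
      apply Tendsto.add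
      · apply Tendsto.smul ?_ (hb k)
        have : ∀ m : ℕ, ((γ'^m : ℚ):ℂ) = ((γ':ℚ):ℂ)^m := by intro m; push_cast; ring
        simp only [this]
        apply tendsto_pow_atTop_nhds_zero_of_norm_lt_one
        rw [Complex.norm_ratCast]
        rwa [abs_of_pos hγ'pos]
      · exact (hb k).mul hc
    have : Tendsto (fun _ : ℕ => a k) atTop (𝓝 (a k)) := tendsto_const_nhds
    have heq := tendsto_nhds_unique (by simpa only [← hak] using hlim) this
    rw [← heq, zero_smul, zero_add]

end CohenFactorization

/-- If `A` is a Banach algebra with a bounded right approximate identity and `U` is a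
Banach left `A`-module, then every (not necessarily continuous) left `A`-module
homomorphism `ψ : A → U` is continuous. -/
theorem stmt_15 {A U : Type*} [NonUnitalNormedRing A] [NormedSpace ℂ A] [CompleteSpace A]
    [NormedAddCommGroup U] [NormedSpace ℂ U] [CompleteSpace U]
    (m : A → U → U)
    (m_add₁ : ∀ (a b : A) (x : U), m (a + b) x = m a x + m b x)
    (m_add₂ : ∀ (a : A) (x y : U), m a (x + y) = m a x + m a y)
    (m_mul : ∀ (a b : A) (x : U), m (a * b) x = m a (m b x))
    (m_norm : ∀ (a : A) (x : U), ‖m a x‖ ≤ ‖a‖ * ‖x‖)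
    (hbai : ∃ C : ℝ, 0 < C ∧ ∀ (F : Finset A) (ε : ℝ), 0 < ε →
      ∃ e : A, ‖e‖ ≤ C ∧ ∀ a ∈ F, ‖a * e - a‖ < ε)
    (ψ : A → U) (hψlin : IsLinearMap ℂ ψ)
    (hψ : ∀ a b : A, ψ (a * b) = m a (ψ b)) :
    Continuous ψ := by
  obtain ⟨C, hC, hbai'⟩ := hbai
  have key : ∀ (a : ℕ → A), Tendsto a atTop (𝓝 0) →
      Tendsto (fun k => ψ (a k)) atTop (𝓝 0) := by
    intro a ha
    obtain ⟨c, b, hb, hfact⟩ := cohen_factorization hC hbai' a ha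
    have heq : ∀ k, ψ (a k) = m (b k) (ψ c) := fun k => by rw [hfact k, hψ]
    simp only [heq]
    apply squeeze_zero_norm (fun k => m_norm (b k) (ψ c))
    have : Tendsto (fun k => ‖b k‖ * ‖ψ c‖) atTop (𝓝 (‖(0:A)‖ * ‖ψ c‖)) :=
      hb.norm.mul_const _
    simpa using this
  rw [continuous_iff_continuousAt]
  intro x
  rw [ContinuousAt, tendsto_iff_seq_tendsto]
  intro u hu
  have ha : Tendsto (fun k => u k - x) atTop (𝓝 0) := by
    have := hu.sub (tendsto_const_nhds (x := x))
    simpa using this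
  have hnull := key _ ha
  have heq : ∀ k, ψ (u k) = ψ (u k - x) + ψ x := by
    intro k
    rw [← hψlin.map_add, sub_add_cancel]
  have hlim : Tendsto (fun k => ψ (u k - x) + ψ x) atTop (𝓝 (0 + ψ x)) :=
    hnull.add tendsto_const_nhds
  show Tendsto (ψ ∘ u) atTop (𝓝 (ψ x))
  simpa only [Function.comp_def, ← heq, zero_add] using hlim
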